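/- Let (X, 𝒜) be a t-(v,k,λ) design with b pairwise distinct blocks on the point set X = [v], with t ≥ 2. Let K₂ be a positive integer with K₂ ≤ t and K₂ dividing v, set K₁ = v/K₂, and for k₁ ∈ [K₁] let D_{k₁} = {(k₁−1)K₂+1, …, k₁K₂}. For each s ∈ {1,…,t−1} let a_s be an integer with 0 ≤ a_s ≤ λ_s^t = λ·C(v−t, k−s)/C(v−t, k−t), not all zero. Define the b×K₁ array Q⁽⁰⁾ with rows indexed by 𝒜 by Q⁽⁰⁾_{A,k₁} = ⋆ if D_{k₁} ⊆ A and null otherwise; and for each k₁ ∈ [K₁] define the b×K₂ array Q^(k₁) with columns indexed by the points i ∈ D_{k₁} by: Q^(k₁)_{A,i} = ⋆ if i ∈ A and D_{k₁} ⊄ A; Q^(k₁)_{A,i} = the integer symbol (k₁, A∖{i}) if i ∈ A and D_{k₁} ⊆ A; and Q^(k₁)_{A,i} = null if i ∉ A. Let B be the array on R×[t]. Then (Q = (Q⁽⁰⁾, Q⁽¹⁾, …, Q^(K₁)), B) is a (K₁, K₂, K'; F, F'; Z₁, Z₂, Z'; 𝒮, 𝒮₁, …, 𝒮_{K₁}) hierarchical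 hotplug placement delivery array with K' = t, F = b, F' = Σ_{s=1}^{t−1} a_s·C(t,s), Z₁ = λ_{K₂}, Z₂ = λ_1 − λ_{K₂}, Z' = Σ_{s=1}^{t−1} a_s·C(t−1,s−1), |𝒮| = Σ_{s=1}^{t−1} a_s·C(t, s+1), and |𝒮_{k₁}| = λ_{K₂}·K₂ for every k₁ ∈ [K₁], where λ_s = λ·C(v−s,t−s)/C(k−s,t−s). -/

import Mathlib

open Finset

/-- `(X, 𝒜)` is a `t`-`(v, k, λ)` design with pairwise distinct blocks: `X` is a
set of `v` points, `𝒜` is a set of `k`-element subsets of `X` (blocks), with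
`v > k ≥ t ≥ 1`, and every `t`-element subset of `X` is contained in exactly
`lam` blocks. -/
def IsDesignF {α : Type*} [DecidableEq α] (t v k lam : ℕ)
    (X : Finset α) (𝒜 : Finset (Finset α)) : Prop :=
  X.card = v ∧ k < v ∧ t ≤ k ∧ 1 ≤ t ∧
  (∀ A ∈ 𝒜, A ⊆ X ∧ A.card = k) ∧
  ∀ T : Finset α, T ⊆ X → T.card = t →
    (𝒜.filter (fun A => T ⊆ A)).card = lam

/-- The row-index set `R = ⋃_{s=1}^{t−1} { (Y,i) : Y ⊆ [t], |Y| = s, i ∈ [a_s] }`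
of the array `B`, where `[n] = {1, …, n}`. -/
def Rset (t : ℕ) (a : ℕ → ℕ) : Finset (Finset ℕ × ℕ) :=
  (Finset.Icc 1 (t - 1)).biUnion fun s =>
    (Finset.powersetCard s (Finset.Icc 1 t)) ×ˢ (Finset.Icc 1 (a s))

/-- The entry of the array `B` at row `(Y,i)` and column `j`:
`none` is the star `⋆` (when `j ∈ Y`), `some (Y ∪ {j}, i)` is the integer entry. -/
def Bent (p : Finset ℕ × ℕ) (j : ℕ) : Option (Finset ℕ × ℕ) :=
  if j ∈ p.1 then none else some (insert j p.1, p.2)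

/-- The set of integer entries of the array `B`. -/
def IntEntries (t : ℕ) (a : ℕ → ℕ) : Finset (Finset ℕ × ℕ) :=
  (((Rset t a) ×ˢ (Finset.Icc 1 t)).filter
      (fun q : (Finset ℕ × ℕ) × ℕ => q.2 ∉ q.1.1)).image
    (fun q : (Finset ℕ × ℕ) × ℕ => (insert q.2 q.1.1, q.1.2))

/-- The point set `D_{k₁} = {(k₁−1)K₂+1, …, k₁K₂}` of mirror `k₁`. -/
def Dblk (K₂ k₁ : ℕ) : Finset ℕ := Finset.Icc ((k₁ - 1) * K₂ + 1) (k₁ * K₂)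

/-- The entry of the mirror subarray `Q^(k₁)` at row (block) `A` and column
(point) `i ∈ D_{k₁}`: `none` is null (`i ∉ A`); `some none` is the star `⋆`
(`i ∈ A` and `D_{k₁} ⊄ A`); `some (some (k₁, A ∖ {i}))` is the integer symbol
(`i ∈ A` and `D_{k₁} ⊆ A`). -/
def Qmir (K₂ k₁ : ℕ) (A : Finset ℕ) (i : ℕ) : Option (Option (ℕ × Finset ℕ)) :=
  if i ∈ A then
    (if Dblk K₂ k₁ ⊆ A then some (some (k₁, A.erase i)) else some none)
  else none

/-- The symbol set `𝒮_{k₁}` of the mirror subarray `Q^(k₁)`. -/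
def Ssym (𝒜 : Finset (Finset ℕ)) (K₂ k₁ : ℕ) : Finset (ℕ × Finset ℕ) :=
  (((𝒜.filter (fun A => Dblk K₂ k₁ ⊆ A)) ×ˢ Dblk K₂ k₁).image
    (fun p : Finset ℕ × ℕ => (k₁, p.1.erase p.2)))


-- trisection identity
lemma aux_tri {a b n : ℕ} (hab : a ≤ b) (hbn : b ≤ n) :
    n.choose b * b.choose a = n.choose a * (n - a).choose (b - a) := by
  have h1 : n.choose b * b.choose a * (a.factorial * (b - a).factorial * (n - b).factorial)
      = n.factorial := by
    have := Nat.choose_mul_factorial_mul_factorial hab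
    have h2 := Nat.choose_mul_factorial_mul_factorial hbn
    calc n.choose b * b.choose a * (a.factorial * (b - a).factorial * (n - b).factorial)
        = n.choose b * (b.choose a * a.factorial * (b - a).factorial) * (n - b).factorial := by ring
      _ = n.choose b * b.factorial * (n - b).factorial := by rw [this]
      _ = n.factorial := h2
  have h3 : n.choose a * (n - a).choose (b - a) *
      (a.factorial * (b - a).factorial * (n - b).factorial) = n.factorial := by
    have han : a ≤ n := hab.trans hbn
    have hsub : n - a - (b - a) = n - b := by omega
    have h4 := Nat.choose_mul_factorial_mul_factorial (Nat.sub_le_sub_right hbn a)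
    rw [hsub] at h4
    have h5 := Nat.choose_mul_factorial_mul_factorial han
    calc n.choose a * (n - a).choose (b - a) *
        (a.factorial * (b - a).factorial * (n - b).factorial)
        = n.choose a * ((n - a).choose (b - a) * (b - a).factorial * (n - b).factorial)
          * a.factorial := by ring
      _ = n.choose a * (n - a).factorial * a.factorial := by rw [h4]
      _ = n.choose a * a.factorial * (n - a).factorial := by ring
      _ = n.factorial := h5
  have hpos : 0 < a.factorial * (b - a).factorial * (n - b).factorial := by positivity
  exact Nat.eq_of_mul_eq_mul_right hpos (h1.trans h3.symm)

-- number of n-subsets between S and A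
lemma aux_between {S A : Finset ℕ} (hSA : S ⊆ A) {n : ℕ} (hn : S.card ≤ n) :
    ((powersetCard n A).filter (fun T => S ⊆ T)).card
      = (A.card - S.card).choose (n - S.card) := by
  rw [← Finset.card_sdiff_of_subset hSA, ← Finset.card_powersetCard]
  apply Finset.card_nbij' (fun T => T \ S) (fun T => T ∪ S)
  · intro T hT
    simp only [Finset.mem_coe, mem_filter, Finset.mem_powersetCard] at hT
    simp only [Finset.mem_coe, Finset.mem_powersetCard]
    exact ⟨Finset.sdiff_subset_sdiff hT.1.1 le_rfl,
      by rw [Finset.card_sdiff_of_subset hT.2, hT.1.2]⟩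
  · intro T hT
    simp only [Finset.mem_coe, Finset.mem_powersetCard] at hT
    simp only [Finset.mem_coe, mem_filter, Finset.mem_powersetCard]
    have hTS : Disjoint T S := Finset.sdiff_disjoint.mono_left hT.1
    constructor
    · constructor
      · exact Finset.union_subset (hT.1.trans (Finset.sdiff_subset)) hSA
      · rw [Finset.card_union_of_disjoint hTS, hT.2]
        omega
    · exact Finset.subset_union_right
  · intro T hT
    simp only [Finset.mem_coe, mem_filter, Finset.mem_powersetCard] at hT
    beta_reduce
    rw [Finset.sdiff_union_of_subset hT.2]
  · intro T hT
    simp only [Finset.mem_coe, Finset.mem_powersetCard] at hT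
    beta_reduce
    rw [Finset.union_sdiff_right, Finset.sdiff_eq_self_of_disjoint
      (Finset.sdiff_disjoint.mono_left hT.1)]


lemma aux_L1 {t v k lam : ℕ} {X : Finset ℕ} {𝒜 : Finset (Finset ℕ)}
    (hX : X.card = v) (hblk : ∀ A ∈ 𝒜, A ⊆ X ∧ A.card = k)
    (hdes : ∀ T : Finset ℕ, T ⊆ X → T.card = t →
      (𝒜.filter (fun A => T ⊆ A)).card = lam)
    {S : Finset ℕ} (hS : S ⊆ X) (hst : S.card ≤ t) :
    (𝒜.filter (fun A => S ⊆ A)).card * (k - S.card).choose (t - S.card)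
      = lam * (v - S.card).choose (t - S.card) := by
  classical
  set P := Finset.powersetCard t X with hP
  have swap := Finset.sum_comm (s := P) (t := 𝒜)
    (f := fun T A => if S ⊆ T ∧ T ⊆ A then (1:ℕ) else 0)
  have lhs : ∑ T ∈ P, ∑ A ∈ 𝒜, (if S ⊆ T ∧ T ⊆ A then (1:ℕ) else 0)
      = lam * (v - S.card).choose (t - S.card) := by
    have h1 : ∀ T ∈ P, ∑ A ∈ 𝒜, (if S ⊆ T ∧ T ⊆ A then (1:ℕ) else 0)
        = if S ⊆ T then lam else 0 := by
      intro T hT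
      rw [Finset.mem_powersetCard] at hT
      by_cases hST : S ⊆ T
      · simp only [hST, true_and, if_true]
        rw [← hdes T hT.1 hT.2, Finset.card_filter]
      · simp [hST]
    rw [Finset.sum_congr rfl h1, ← Finset.sum_filter]
    rw [Finset.sum_const, smul_eq_mul]
    have h2 : (P.filter (fun T => S ⊆ T)).card = (v - S.card).choose (t - S.card) := by
      rw [hP, aux_between hS hst, hX]
    rw [h2, Nat.mul_comm]
  have rhs : ∑ A ∈ 𝒜, ∑ T ∈ P, (if S ⊆ T ∧ T ⊆ A then (1:ℕ) else 0)
      = (𝒜.filter (fun A => S ⊆ A)).card * (k - S.card).choose (t - S.card) := by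
    have h1 : ∀ A ∈ 𝒜, ∑ T ∈ P, (if S ⊆ T ∧ T ⊆ A then (1:ℕ) else 0)
        = if S ⊆ A then (k - S.card).choose (t - S.card) else 0 := by
      intro A hA
      obtain ⟨hAX, hAk⟩ := hblk A hA
      have hPA : P.filter (fun T => S ⊆ T ∧ T ⊆ A)
          = (Finset.powersetCard t A).filter (fun T => S ⊆ T) := by
        ext T
        simp only [hP, Finset.mem_filter, Finset.mem_powersetCard]
        constructor
        · rintro ⟨⟨_, h2⟩, h3, h4⟩; exact ⟨⟨h4, h2⟩, h3⟩
        · rintro ⟨⟨h4, h2⟩, h3⟩; exact ⟨⟨h4.trans hAX, h2⟩, h3, h4⟩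
      rw [← Finset.sum_filter_add_sum_filter_not P (fun T => S ⊆ T ∧ T ⊆ A)]
      have e1 : ∑ T ∈ P.filter (fun T => S ⊆ T ∧ T ⊆ A),
          (if S ⊆ T ∧ T ⊆ A then (1:ℕ) else 0) = (P.filter (fun T => S ⊆ T ∧ T ⊆ A)).card := by
        rw [Finset.sum_ite_of_true (by intro T hT; exact (Finset.mem_filter.mp hT).2),
          Finset.sum_const, smul_eq_mul, Nat.mul_one]
      have e2 : ∑ T ∈ P.filter (fun T => ¬(S ⊆ T ∧ T ⊆ A)),
          (if S ⊆ T ∧ T ⊆ A then (1:ℕ) else 0) = 0 := by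
        rw [Finset.sum_ite_of_false (by intro T hT; exact (Finset.mem_filter.mp hT).2),
          Finset.sum_const, smul_eq_mul, Nat.mul_zero]
      rw [e1, e2, Nat.add_zero, hPA]
      by_cases hSA : S ⊆ A
      · rw [if_pos hSA, aux_between hSA hst, hAk]
      · rw [if_neg hSA]
        rw [Finset.card_eq_zero, Finset.filter_eq_empty_iff]
        intro T hT
        rw [Finset.mem_powersetCard] at hT
        intro hST; exact hSA (hST.trans hT.1)
    rw [Finset.sum_congr rfl h1, ← Finset.sum_filter]
    rw [Finset.sum_const, smul_eq_mul]
  rw [lhs, rhs] at swap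
  exact swap.symm


lemma aux_N {t v k lam : ℕ} {X : Finset ℕ} {𝒜 : Finset (Finset ℕ)}
    (hX : X.card = v) (hkv : k < v) (htk : t ≤ k)
    (hblk : ∀ A ∈ 𝒜, A ⊆ X ∧ A.card = k)
    (hdes : ∀ T : Finset ℕ, T ⊆ X → T.card = t →
      (𝒜.filter (fun A => T ⊆ A)).card = lam) :
    ∀ (W S : Finset ℕ), S ⊆ X → W ⊆ X → Disjoint S W → S.card + W.card ≤ t →
    (𝒜.filter (fun A => S ⊆ A ∧ Disjoint A W)).card * (v - t).choose (k - t)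
      = lam * (v - S.card - W.card).choose (k - S.card) := by
  classical
  intro W
  induction W using Finset.strongInduction with
  | _ W ih =>
    intro S hSX hWX hdisj hcard
    rcases W.eq_empty_or_nonempty with rfl | ⟨x, hx⟩
    · -- base case: W = ∅
      simp only [Finset.card_empty, Nat.add_zero, Nat.sub_zero] at hcard ⊢
      have hfe : 𝒜.filter (fun A => S ⊆ A ∧ Disjoint A (∅ : Finset ℕ))
          = 𝒜.filter (fun A => S ⊆ A) := by
        simp
      rw [hfe]
      have hL1 := aux_L1 hX hblk hdes hSX hcard
      -- multiply by (v-t).choose (k-t) ... use trisection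
      have htv : t ≤ v := htk.trans hkv.le
      have hsv : S.card ≤ v := hcard.trans htv
      have key : (v - S.card).choose (k - S.card) * (k - S.card).choose (t - S.card)
          = (v - S.card).choose (t - S.card) * (v - t).choose (k - t) := by
        have h7 := aux_tri (n := v - S.card) (a := t - S.card) (b := k - S.card)
          (by omega) (by omega)
        have e1 : v - S.card - (t - S.card) = v - t := by omega
        have e2 : k - S.card - (t - S.card) = k - t := by omega
        rw [h7, e1, e2]
      have hpos : 0 < (k - S.card).choose (t - S.card) := Nat.choose_pos (by omega)
      apply Nat.eq_of_mul_eq_mul_right hpos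
      calc (𝒜.filter (fun A => S ⊆ A)).card * (v - t).choose (k - t)
            * (k - S.card).choose (t - S.card)
          = (𝒜.filter (fun A => S ⊆ A)).card * (k - S.card).choose (t - S.card)
            * (v - t).choose (k - t) := by ring
        _ = lam * (v - S.card).choose (t - S.card) * (v - t).choose (k - t) := by rw [hL1]
        _ = lam * ((v - S.card).choose (t - S.card) * (v - t).choose (k - t)) := by ring
        _ = lam * ((v - S.card).choose (k - S.card) * (k - S.card).choose (t - S.card)) := by
            rw [key]
        _ = lam * (v - S.card).choose (k - S.card) * (k - S.card).choose (t - S.card) := by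
            ring
    · -- inductive step
      set W' := W.erase x with hW'
      have hWx : W = insert x W' := by rw [hW', Finset.insert_erase hx]
      have hW'ss : W' ⊂ W := Finset.erase_ssubset hx
      have hxX : x ∈ X := hWX hx
      have hxS : x ∉ S := fun h => (Finset.disjoint_left.mp hdisj h) hx
      have hW'X : W' ⊆ X := (Finset.erase_subset _ _).trans hWX
      have hcardW : W.card = W'.card + 1 := by
        rw [hWx, Finset.card_insert_of_notMem (Finset.notMem_erase _ _)]
      -- partition
      have hpart : (𝒜.filter (fun A => S ⊆ A ∧ Disjoint A W')).card
          = (𝒜.filter (fun A => S ⊆ A ∧ Disjoint A W)).card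
            + (𝒜.filter (fun A => insert x S ⊆ A ∧ Disjoint A W')).card := by
        have h1 : 𝒜.filter (fun A => S ⊆ A ∧ Disjoint A W)
            = (𝒜.filter (fun A => S ⊆ A ∧ Disjoint A W')).filter (fun A => x ∉ A) := by
          ext A
          simp only [Finset.mem_filter, hWx, Finset.disjoint_insert_right]
          tauto
        have h2 : 𝒜.filter (fun A => insert x S ⊆ A ∧ Disjoint A W')
            = (𝒜.filter (fun A => S ⊆ A ∧ Disjoint A W')).filter (fun A => x ∈ A) := by
          ext A
          simp only [Finset.mem_filter, Finset.insert_subset_iff]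
          tauto
        rw [h1, h2, Nat.add_comm]
        exact (Finset.card_filter_add_card_filter_not _).symm
      have ih1 := ih W' hW'ss S hSX hW'X (hdisj.mono_right (Finset.erase_subset _ _))
        (by omega)
      have ih2 := ih W' hW'ss (insert x S)
        (Finset.insert_subset hxX hSX) hW'X
        (by
          rw [Finset.disjoint_insert_left]
          exact ⟨Finset.notMem_erase _ _, hdisj.mono_right (Finset.erase_subset _ _)⟩)
        (by rw [Finset.card_insert_of_notMem hxS]; omega)
      rw [Finset.card_insert_of_notMem hxS] at ih2
      -- Pascal
      have hpascal : (v - S.card - W'.card).choose (k - S.card)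
          = (v - S.card - W.card).choose (k - S.card)
            + (v - S.card - W.card).choose (k - S.card - 1) := by
        have htv : t ≤ v := htk.trans hkv.le
        have h5 : v - S.card - W'.card = (v - S.card - W.card) + 1 := by omega
        have h6 : k - S.card = (k - S.card - 1) + 1 := by omega
        rw [h5, h6, Nat.choose_succ_succ]
        have h8 : (k - S.card - 1).succ = k - S.card := by omega
        rw [h8]
        have h9 : k - S.card - 1 + 1 = k - S.card := by omega
        have h10 : k - S.card - 1 + 1 - 1 = k - S.card - 1 := by omega
        rw [h9]
        exact Nat.add_comm _ _
      have hc1 : k - (S.card + 1) = k - S.card - 1 := by omega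
      have hc2 : v - (S.card + 1) - W'.card = v - S.card - W.card := by
        have : t ≤ v := htk.trans hkv.le
        omega
      rw [hc1, hc2] at ih2
      have goal : (𝒜.filter (fun A => S ⊆ A ∧ Disjoint A W)).card * (v - t).choose (k - t)
          = lam * (v - S.card - W.card).choose (k - S.card) := by
        have e : ((𝒜.filter (fun A => S ⊆ A ∧ Disjoint A W)).card
              + (𝒜.filter (fun A => insert x S ⊆ A ∧ Disjoint A W')).card)
            * (v - t).choose (k - t)
            = lam * ((v - S.card - W.card).choose (k - S.card)
              + (v - S.card - W.card).choose (k - S.card - 1)) := by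
          rw [← hpart, ih1, hpascal]
        rw [Nat.add_mul, Nat.mul_add, ih2] at e
        omega
      exact goal

lemma card_Dblk {K₂ k₁ : ℕ} (hk₁ : 1 ≤ k₁) : (Dblk K₂ k₁).card = K₂ := by
  unfold Dblk
  rw [Nat.card_Icc]
  have h := Nat.sub_one_mul k₁ K₂
  have h2 : K₂ ≤ k₁ * K₂ := Nat.le_mul_of_pos_left K₂ (by omega)
  omega

lemma Dblk_subset {K₂ k₁ K₁ v : ℕ} (hk₁ : k₁ ≤ K₁) (hdvd : K₂ ∣ v) (hK₁ : K₁ = v / K₂) :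
    Dblk K₂ k₁ ⊆ Finset.Icc 1 v := by
  intro x hx
  rw [Dblk, Finset.mem_Icc] at hx
  rw [Finset.mem_Icc]
  have h1 : K₁ * K₂ = v := by
    rw [hK₁, Nat.div_mul_cancel hdvd]
  have h2 : k₁ * K₂ ≤ K₁ * K₂ := Nat.mul_le_mul_right K₂ hk₁
  omega

lemma Dblk_disjoint {K₂ k₁ k₁' : ℕ} (h1 : 1 ≤ k₁) (h1' : 1 ≤ k₁') (hne : k₁ ≠ k₁') :
    Disjoint (Dblk K₂ k₁) (Dblk K₂ k₁') := by
  rw [Finset.disjoint_left]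
  intro x hx hx'
  rw [Dblk, Finset.mem_Icc] at hx hx'
  rcases Nat.lt_or_ge k₁ k₁' with h | h
  · have : k₁ * K₂ ≤ (k₁' - 1) * K₂ := Nat.mul_le_mul_right K₂ (by omega)
    omega
  · have hlt : k₁' < k₁ := by omega
    have : k₁' * K₂ ≤ (k₁ - 1) * K₂ := Nat.mul_le_mul_right K₂ (by omega)
    omega

lemma Qmir_symbol {K₂ k₁ : ℕ} {A : Finset ℕ} {i : ℕ} {l : ℕ × Finset ℕ} :
    Qmir K₂ k₁ A i = some (some l) ↔
      i ∈ A ∧ Dblk K₂ k₁ ⊆ A ∧ l = (k₁, A.erase i) := by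
  unfold Qmir
  split_ifs with h1 h2 <;> simp_all [eq_comm]

lemma Qmir_star {K₂ k₁ : ℕ} {A : Finset ℕ} {i : ℕ} :
    Qmir K₂ k₁ A i = some none ↔ i ∈ A ∧ ¬ Dblk K₂ k₁ ⊆ A := by
  unfold Qmir
  split_ifs with h1 h2 <;> simp_all

lemma star_iff {K₂ k₁ : ℕ} {A : Finset ℕ} {i : ℕ} (hi : i ∈ Dblk K₂ k₁) :
    (Dblk K₂ k₁ ⊆ A ∨ Qmir K₂ k₁ A i = some none) ↔ i ∈ A := by
  constructor
  · rintro (h | h)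
    · exact h hi
    · exact (Qmir_star.mp h).1
  · intro hiA
    by_cases hD : Dblk K₂ k₁ ⊆ A
    · exact Or.inl hD
    · exact Or.inr (Qmir_star.mpr ⟨hiA, hD⟩)

-- the "same symbol" contradiction
lemma symbol_clash {K₂ k₁ : ℕ} {A A' : Finset ℕ} {i i' : ℕ}
    (hi : i ∈ Dblk K₂ k₁) (hi' : i' ∈ Dblk K₂ k₁)
    (hiA : i ∈ A) (hi'A' : i' ∈ A')
    (hDA : Dblk K₂ k₁ ⊆ A) (hDA' : Dblk K₂ k₁ ⊆ A')
    (herase : A.erase i = A'.erase i') (hne : (A, i) ≠ (A', i')) : False := by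
  by_cases hii : i = i'
  · subst hii
    have : A = A' := by
      rw [← Finset.insert_erase hiA, ← Finset.insert_erase hi'A', herase]
    exact hne (by rw [this])
  · have h1 : i' ∈ A := hDA hi'
    have h2 : i' ∈ A.erase i := Finset.mem_erase.mpr ⟨fun h => hii h.symm, h1⟩
    rw [herase] at h2
    exact (Finset.notMem_erase i' A') h2


lemma Rset_parts_disjoint (t : ℕ) (a : ℕ → ℕ) :
    ∀ s ∈ Finset.Icc 1 (t-1), ∀ s' ∈ Finset.Icc 1 (t-1), s ≠ s' →
      Disjoint ((Finset.powersetCard s (Finset.Icc 1 t)) ×ˢ (Finset.Icc 1 (a s)))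
        ((Finset.powersetCard s' (Finset.Icc 1 t)) ×ˢ (Finset.Icc 1 (a s'))) := by
  intro s _ s' _ hne
  rw [Finset.disjoint_left]
  rintro ⟨Y, i⟩ h h'
  rw [Finset.mem_product, Finset.mem_powersetCard] at h h'
  exact hne (h.1.2 ▸ h'.1.2 ▸ rfl)

lemma mem_Rset {t : ℕ} {a : ℕ → ℕ} {p : Finset ℕ × ℕ} :
    p ∈ Rset t a ↔ p.1 ⊆ Finset.Icc 1 t ∧ 1 ≤ p.1.card ∧ p.1.card ≤ t - 1 ∧
      p.2 ∈ Finset.Icc 1 (a p.1.card) := by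
  unfold Rset
  rw [Finset.mem_biUnion]
  constructor
  · rintro ⟨s, hs, hp⟩
    rw [Finset.mem_Icc] at hs
    rw [Finset.mem_product, Finset.mem_powersetCard] at hp
    refine ⟨hp.1.1, ?_, ?_, ?_⟩ <;> rw [hp.1.2] <;> [exact hs.1; exact hs.2; exact hp.2]
  · rintro ⟨h1, h2, h3, h4⟩
    exact ⟨p.1.card, Finset.mem_Icc.mpr ⟨h2, h3⟩, Finset.mem_product.mpr
      ⟨Finset.mem_powersetCard.mpr ⟨h1, rfl⟩, h4⟩⟩

lemma card_Rset (t : ℕ) (a : ℕ → ℕ) :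
    (Rset t a).card = ∑ s ∈ Finset.Icc 1 (t - 1), a s * Nat.choose t s := by
  unfold Rset
  rw [Finset.card_biUnion (Rset_parts_disjoint t a)]
  apply Finset.sum_congr rfl
  intro s _
  rw [Finset.card_product, Finset.card_powersetCard, Nat.card_Icc, Nat.card_Icc]
  have : t + 1 - 1 = t := by omega
  rw [this]
  have : a s + 1 - 1 = a s := by omega
  rw [this, Nat.mul_comm]

lemma Bent_star {p : Finset ℕ × ℕ} {j : ℕ} : Bent p j = none ↔ j ∈ p.1 := by
  unfold Bent; split_ifs with h <;> simp [h]

lemma Bent_int {p : Finset ℕ × ℕ} {j : ℕ} {e : Finset ℕ × ℕ} :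
    Bent p j = some e ↔ j ∉ p.1 ∧ e = (insert j p.1, p.2) := by
  unfold Bent; split_ifs with h <;> simp [h, eq_comm]

lemma Rset_col_stars {t : ℕ} (a : ℕ → ℕ) {j : ℕ} (hj : j ∈ Finset.Icc 1 t) :
    ((Rset t a).filter (fun p => Bent p j = none)).card =
      ∑ s ∈ Finset.Icc 1 (t - 1), a s * Nat.choose (t - 1) (s - 1) := by
  unfold Rset
  rw [Finset.filter_biUnion]
  rw [Finset.card_biUnion (fun s hs s' hs' hne =>
    (Rset_parts_disjoint t a s hs s' hs' hne).mono
      (Finset.filter_subset _ _) (Finset.filter_subset _ _))]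
  apply Finset.sum_congr rfl
  intro s hs
  rw [Finset.mem_Icc] at hs
  have hfe : ((Finset.powersetCard s (Finset.Icc 1 t)) ×ˢ (Finset.Icc 1 (a s))).filter
      (fun p => Bent p j = none)
      = ((Finset.powersetCard s (Finset.Icc 1 t)).filter (fun Y => {j} ⊆ Y))
        ×ˢ (Finset.Icc 1 (a s)) := by
    ext ⟨Y, i⟩
    rw [Finset.mem_filter, Finset.mem_product, Finset.mem_product, Finset.mem_filter]
    simp only [Bent_star, Finset.singleton_subset_iff]
    tauto
  rw [hfe, Finset.card_product, Nat.card_Icc]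
  have hone : a s + 1 - 1 = a s := by omega
  rw [hone]
  have hbt := aux_between (S := {j}) (A := Finset.Icc 1 t)
    (Finset.singleton_subset_iff.mpr hj) (n := s)
    (by rw [Finset.card_singleton]; omega)
  rw [Finset.card_singleton, Nat.card_Icc] at hbt
  rw [hbt]
  have : t + 1 - 1 - 1 = t - 1 := by omega
  rw [this, Nat.mul_comm]

lemma IntEntries_eq (t : ℕ) (a : ℕ → ℕ) (ht : 2 ≤ t) :
    IntEntries t a = (Finset.Icc 1 (t-1)).biUnion fun s =>
      (Finset.powersetCard (s+1) (Finset.Icc 1 t)) ×ˢ (Finset.Icc 1 (a s)) := by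
  ext ⟨Z, i⟩
  rw [IntEntries, Finset.mem_image, Finset.mem_biUnion]
  constructor
  · rintro ⟨⟨⟨Y, i'⟩, j⟩, hq, heq⟩
    rw [Finset.mem_filter, Finset.mem_product] at hq
    obtain ⟨⟨hR, hj⟩, hjY⟩ := hq
    rw [mem_Rset] at hR
    simp only at hR heq hjY hj
    obtain ⟨hYsub, h1, h2, h3⟩ := hR
    refine ⟨Y.card, Finset.mem_Icc.mpr ⟨h1, h2⟩, ?_⟩
    rw [Finset.mem_product, Finset.mem_powersetCard]
    rw [Prod.mk.injEq] at heq
    obtain ⟨h5, h6⟩ := heq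
    subst h5; subst h6
    exact ⟨⟨Finset.insert_subset hj hYsub, by rw [Finset.card_insert_of_notMem hjY]⟩, h3⟩
  · rintro ⟨s, hs, hZ⟩
    rw [Finset.mem_Icc] at hs
    rw [Finset.mem_product, Finset.mem_powersetCard] at hZ
    simp only at hZ
    obtain ⟨⟨hZsub, hZcard⟩, hi⟩ := hZ
    have hZne : Z.Nonempty := Finset.card_pos.mp (by omega)
    obtain ⟨j, hjZ⟩ := hZne
    refine ⟨⟨⟨Z.erase j, i⟩, j⟩, ?_, ?_⟩
    · rw [Finset.mem_filter, Finset.mem_product]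
      have hec : (Z.erase j).card = s := by
        rw [Finset.card_erase_of_mem hjZ]; omega
      refine ⟨⟨?_, hZsub hjZ⟩, Finset.notMem_erase _ _⟩
      rw [mem_Rset]
      simp only
      exact ⟨(Finset.erase_subset _ _).trans hZsub, by omega, by omega, by rw [hec]; exact hi⟩
    · simp only
      rw [Finset.insert_erase hjZ]

lemma card_IntEntries (t : ℕ) (a : ℕ → ℕ) (ht : 2 ≤ t) :
    (IntEntries t a).card = ∑ s ∈ Finset.Icc 1 (t - 1), a s * Nat.choose t (s + 1) := by
  rw [IntEntries_eq t a ht]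
  rw [Finset.card_biUnion]
  · apply Finset.sum_congr rfl
    intro s _
    rw [Finset.card_product, Finset.card_powersetCard, Nat.card_Icc, Nat.card_Icc]
    have h1 : t + 1 - 1 = t := by omega
    have h2 : a s + 1 - 1 = a s := by omega
    rw [h1, h2, Nat.mul_comm]
  · intro s _ s' _ hne
    rw [Function.onFun, Finset.disjoint_left]
    rintro ⟨Y, i⟩ h h'
    rw [Finset.mem_product, Finset.mem_powersetCard] at h h'
    omega


lemma Bent_pda {t : ℕ} {a : ℕ → ℕ} :
    ∀ p ∈ Rset t a, ∀ p' ∈ Rset t a,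
      ∀ j ∈ Finset.Icc 1 t, ∀ j' ∈ Finset.Icc 1 t,
      (p, j) ≠ (p', j') → ∀ e : Finset ℕ × ℕ,
        Bent p j = some e → Bent p' j' = some e →
          p ≠ p' ∧ j ≠ j' ∧ Bent p j' = none ∧ Bent p' j = none := by
  rintro ⟨Y, i⟩ hp ⟨Y', i'⟩ hp' j hj j' hj' hne e h1 h2
  rw [Bent_int] at h1 h2
  obtain ⟨hjY, he1⟩ := h1
  obtain ⟨hj'Y', he2⟩ := h2
  rw [he2] at he1
  simp only at he1 hjY hj'Y'
  rw [Prod.mk.injEq] at he1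
  obtain ⟨hins0, hii0⟩ := he1
  have hins : insert j Y = insert j' Y' := hins0.symm
  have hii : i = i' := hii0.symm
  have hjj' : j ≠ j' := by
    rintro rfl
    apply hne
    have hYY' : Y = Y' := by
      ext x
      by_cases hx : x = j
      · subst hx; simp [hjY, hj'Y']
      · have := Finset.ext_iff.mp hins x
        simp [Finset.mem_insert, hx] at this
        tauto
    rw [hYY', hii]
  have hj'Y : j' ∈ Y := by
    have : j' ∈ insert j' Y' := Finset.mem_insert_self _ _
    rw [← hins] at this
    rcases Finset.mem_insert.mp this with h | h
    · exact absurd h hjj'.symm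
    · exact h
  have hjY' : j ∈ Y' := by
    have : j ∈ insert j Y := Finset.mem_insert_self _ _
    rw [hins] at this
    rcases Finset.mem_insert.mp this with h | h
    · exact absurd h hjj'
    · exact h
  have hYY' : Y ≠ Y' := fun h => hjY (h ▸ hjY')
  refine ⟨?_, hjj', ?_, ?_⟩
  · intro h; exact hYY' (congrArg Prod.fst h)
  · rw [Bent_star]; exact hj'Y
  · rw [Bent_star]; exact hjY'


lemma aux_nS {t v k lam : ℕ} {X : Finset ℕ} {𝒜 : Finset (Finset ℕ)}
    (hX : X.card = v) (htk : t ≤ k)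
    (hblk : ∀ A ∈ 𝒜, A ⊆ X ∧ A.card = k)
    (hdes : ∀ T : Finset ℕ, T ⊆ X → T.card = t →
      (𝒜.filter (fun A => T ⊆ A)).card = lam)
    {S : Finset ℕ} (hS : S ⊆ X) (hst : S.card ≤ t) :
    (𝒜.filter (fun A => S ⊆ A)).card
      = lam * (v - S.card).choose (t - S.card) / (k - S.card).choose (t - S.card) := by
  have h := aux_L1 hX hblk hdes hS hst
  have hpos : 0 < (k - S.card).choose (t - S.card) := Nat.choose_pos (by omega)
  rw [← h, Nat.mul_div_cancel _ hpos]

lemma Ssym_card_eq {𝒜 : Finset (Finset ℕ)} {K₂ k₁ : ℕ} (hk₁ : 1 ≤ k₁) :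
    (Ssym 𝒜 K₂ k₁).card = (𝒜.filter (fun A => Dblk K₂ k₁ ⊆ A)).card * K₂ := by
  rw [Ssym, Finset.card_image_of_injOn, Finset.card_product, card_Dblk hk₁]
  rintro ⟨A, i⟩ h ⟨A', i'⟩ h' heq
  rw [Finset.mem_coe, Finset.mem_product, Finset.mem_filter] at h h'
  simp only at h h' heq
  obtain ⟨⟨hA, hDA⟩, hi⟩ := h
  obtain ⟨⟨hA', hDA'⟩, hi'⟩ := h'
  rw [Prod.mk.injEq] at heq
  by_contra hne
  exact symbol_clash hi hi' (hDA hi) (hDA' hi') hDA hDA' heq.2 hne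


lemma hotplug (t v k lam K₁ K₂ : ℕ) (𝒜 : Finset (Finset ℕ))
    (hkv : k < v) (htk : t ≤ k)
    (hblk : ∀ A ∈ 𝒜, A ⊆ Finset.Icc 1 v ∧ A.card = k)
    (hdes : ∀ T : Finset ℕ, T ⊆ Finset.Icc 1 v → T.card = t →
      (𝒜.filter (fun A => T ⊆ A)).card = lam)
    (hdvd : K₂ ∣ v) (hK₁ : K₁ = v / K₂)
    (a : ℕ → ℕ)
    (ha : ∀ s ∈ Finset.Icc 1 (t - 1),
      a s ≤ lam * Nat.choose (v - t) (k - s) / Nat.choose (v - t) (k - t)) :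
    ∀ τ : Finset (ℕ × ℕ),
      (∀ u ∈ τ, u.1 ∈ Finset.Icc 1 K₁ ∧ u.2 ∈ Dblk K₂ u.1) → τ.card = t →
      ∃ ζ : Finset (Finset ℕ), ζ ⊆ 𝒜 ∧
        ζ.card = ∑ s ∈ Finset.Icc 1 (t - 1), a s * Nat.choose t s ∧
        ∃ (ρ : Finset ℕ → Finset ℕ × ℕ) (σ : ℕ × ℕ → ℕ),
          Set.BijOn ρ ↑ζ ↑(Rset t a) ∧
          Set.BijOn σ ↑τ ↑(Finset.Icc 1 t) ∧
          ∀ A ∈ ζ, ∀ u ∈ τ,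
            ((Dblk K₂ u.1 ⊆ A ∨ Qmir K₂ u.1 A u.2 = some none) ↔
              σ u ∈ (ρ A).1) := by
  classical
  intro τ hτ hτcard
  have hXcard : (Finset.Icc 1 v).card = v := by rw [Nat.card_Icc]; omega
  -- injectivity of second projection on τ
  have hsnd : Set.InjOn (Prod.snd : ℕ × ℕ → ℕ) ↑τ := by
    rintro u hu u' hu' h
    rw [Finset.mem_coe] at hu hu'
    obtain ⟨hu1, hu2⟩ := hτ u hu
    obtain ⟨hu1', hu2'⟩ := hτ u' hu'
    rw [Finset.mem_Icc] at hu1 hu1'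
    have h11 : u.1 = u'.1 := by
      by_contra hne
      exact (Finset.disjoint_left.mp (Dblk_disjoint hu1.1 hu1'.1 hne) hu2) (h ▸ hu2')
    exact Prod.ext h11 h
  set T := τ.image Prod.snd with hT
  have hTcard : T.card = t := by rw [hT, Finset.card_image_of_injOn hsnd, hτcard]
  have hTX : T ⊆ Finset.Icc 1 v := by
    intro x hx
    rw [hT, Finset.mem_image] at hx
    obtain ⟨u, hu, rfl⟩ := hx
    obtain ⟨hu1, hu2⟩ := hτ u hu
    rw [Finset.mem_Icc] at hu1
    exact Dblk_subset hu1.2 hdvd hK₁ hu2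
  -- the bijection σ
  have hcards : τ.card = (Finset.Icc 1 t).card := by rw [hτcard, Nat.card_Icc]; omega
  set e := Finset.equivOfCardEq hcards with he
  set σ : ℕ × ℕ → ℕ := fun u => if h : u ∈ τ then (e ⟨u, h⟩ : ℕ) else 0 with hσ
  have hσmem : ∀ u ∈ τ, σ u ∈ Finset.Icc 1 t := by
    intro u hu
    rw [hσ]; simp only [dif_pos hu]; exact (e ⟨u, hu⟩).2
  have hσinj : Set.InjOn σ ↑τ := by
    intro u hu u' hu' h
    rw [Finset.mem_coe] at hu hu'
    rw [hσ] at h; simp only [dif_pos hu, dif_pos hu'] at h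
    have := e.injective (Subtype.coe_injective h)
    exact congrArg Subtype.val this
  have hσsurj : ∀ j ∈ Finset.Icc 1 t, ∃ u ∈ τ, σ u = j := by
    intro j hj
    refine ⟨(e.symm ⟨j, hj⟩ : ℕ × ℕ), (e.symm ⟨j, hj⟩).2, ?_⟩
    rw [hσ]; simp only [dif_pos (e.symm ⟨j, hj⟩).2]
    rw [Subtype.coe_eta, Equiv.apply_symm_apply]
  have hσbij : Set.BijOn σ ↑τ ↑(Finset.Icc 1 t) := by
    refine ⟨fun u hu => hσmem u hu, hσinj, fun j hj => ?_⟩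
    obtain ⟨u, hu, huj⟩ := hσsurj j hj
    exact ⟨u, hu, huj⟩
  -- the trace sets
  set SY : Finset ℕ → Finset ℕ :=
    fun Y => (τ.filter (fun u => σ u ∈ Y)).image Prod.snd with hSY
  have hSYmem : ∀ Y : Finset ℕ, ∀ u ∈ τ, (u.2 ∈ SY Y ↔ σ u ∈ Y) := by
    intro Y u hu
    simp only [hSY, Finset.mem_image, Finset.mem_filter]
    constructor
    · rintro ⟨u', ⟨hu', hσu'⟩, h2⟩
      rwa [hsnd (Finset.mem_coe.mpr hu') (Finset.mem_coe.mpr hu) h2] at hσu'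
    · intro h; exact ⟨u, ⟨hu, h⟩, rfl⟩
  have hSYsub : ∀ Y : Finset ℕ, SY Y ⊆ T :=
    fun Y => Finset.image_subset_image (Finset.filter_subset _ _)
  have hSYcard : ∀ Y : Finset ℕ, Y ⊆ Finset.Icc 1 t → (SY Y).card = Y.card := by
    intro Y hY
    rw [hSY]
    rw [Finset.card_image_of_injOn
      (hsnd.mono (Finset.coe_subset.mpr (Finset.filter_subset _ _)))]
    apply Finset.card_nbij σ
    · intro u hu; exact (Finset.mem_filter.mp hu).2
    · exact hσinj.mono (Finset.coe_subset.mpr (Finset.filter_subset _ _))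
    · intro j hj
      rw [Finset.mem_coe] at hj
      obtain ⟨u, hu, rfl⟩ := hσsurj j (hY hj)
      exact ⟨u, Finset.mem_coe.mpr (Finset.mem_filter.mpr ⟨hu, hj⟩), rfl⟩
  have hSYinj : ∀ Y : Finset ℕ, Y ⊆ Finset.Icc 1 t → ∀ Y' : Finset ℕ,
      Y' ⊆ Finset.Icc 1 t → SY Y = SY Y' → Y = Y' := by
    intro Y hY Y' hY' h
    ext j
    by_cases hj : j ∈ Finset.Icc 1 t
    · obtain ⟨u, hu, rfl⟩ := hσsurj j hj
      rw [← hSYmem Y u hu, ← hSYmem Y' u hu, h]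
    · constructor
      · intro hjy; exact absurd (hY hjy) hj
      · intro hjy; exact absurd (hY' hjy) hj
  -- the counting lower bound
  have hcount : ∀ Y : Finset ℕ, Y ⊆ Finset.Icc 1 t → 1 ≤ Y.card → Y.card ≤ t - 1 →
      a Y.card ≤ (𝒜.filter (fun A => A ∩ T = SY Y)).card := by
    intro Y hY h1 h2
    have hfe : 𝒜.filter (fun A => A ∩ T = SY Y)
        = 𝒜.filter (fun A => SY Y ⊆ A ∧ Disjoint A (T \ SY Y)) := by
      apply Finset.filter_congr
      intro A _
      constructor
      · intro h
        refine ⟨h ▸ Finset.inter_subset_left, ?_⟩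
        rw [Finset.disjoint_right]
        intro x hx
        rw [Finset.mem_sdiff] at hx
        intro hxA
        exact hx.2 (h ▸ Finset.mem_inter.mpr ⟨hxA, hx.1⟩)
      · rintro ⟨hsub, hdis⟩
        apply Finset.Subset.antisymm
        · intro x hx
          rw [Finset.mem_inter] at hx
          by_contra hxS
          exact (Finset.disjoint_left.mp hdis hx.1) (Finset.mem_sdiff.mpr ⟨hx.2, hxS⟩)
        · intro x hx
          exact Finset.mem_inter.mpr ⟨hsub hx, hSYsub Y hx⟩
    rw [hfe]
    have hScard := hSYcard Y hY
    have hWcard : (T \ SY Y).card = t - Y.card := by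
      rw [Finset.card_sdiff_of_subset (hSYsub Y), hSYcard Y hY, hTcard]
    have hN := aux_N hXcard hkv htk hblk hdes (T \ SY Y) (SY Y)
      ((hSYsub Y).trans hTX) ((Finset.sdiff_subset).trans hTX)
      (Finset.disjoint_sdiff) (by rw [hScard, hWcard]; omega)
    rw [hScard, hWcard] at hN
    have hv : v - Y.card - (t - Y.card) = v - t := by omega
    rw [hv] at hN
    have hpos : 0 < (v - t).choose (k - t) := Nat.choose_pos (by omega)
    calc a Y.card ≤ lam * (v - t).choose (k - Y.card) / (v - t).choose (k - t) :=
          ha Y.card (Finset.mem_Icc.mpr ⟨h1, h2⟩)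
      _ = (𝒜.filter (fun A => SY Y ⊆ A ∧ Disjoint A (T \ SY Y))).card := by
          rw [← hN, Nat.mul_div_cancel _ hpos]
  -- choose the blocks
  have hch : ∀ Y : Finset ℕ, ∃ g : ℕ → Finset ℕ,
      (Y ⊆ Finset.Icc 1 t ∧ 1 ≤ Y.card ∧ Y.card ≤ t - 1) →
      Set.InjOn g ↑(Finset.Icc 1 (a Y.card)) ∧
      ∀ i ∈ Finset.Icc 1 (a Y.card), g i ∈ 𝒜 ∧ g i ∩ T = SY Y := by
    intro Y
    by_cases hcond : Y ⊆ Finset.Icc 1 t ∧ 1 ≤ Y.card ∧ Y.card ≤ t - 1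
    · obtain ⟨hY, h1, h2⟩ := hcond
      have hle := hcount Y hY h1 h2
      obtain ⟨𝒞, h𝒞sub, h𝒞card⟩ := Finset.exists_subset_card_eq hle
      have hic : (Finset.Icc 1 (a Y.card)).card = 𝒞.card := by
        rw [h𝒞card, Nat.card_Icc]; omega
      set e2 := Finset.equivOfCardEq hic with he2
      refine ⟨fun i => if h : i ∈ Finset.Icc 1 (a Y.card) then (e2 ⟨i, h⟩ : Finset ℕ)
        else ∅, fun _ => ⟨?_, ?_⟩⟩
      · intro i hi i' hi' hgg
        rw [Finset.mem_coe] at hi hi'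
        simp only [dif_pos hi, dif_pos hi'] at hgg
        have := e2.injective (Subtype.coe_injective hgg)
        exact congrArg Subtype.val this
      · intro i hi
        simp only [dif_pos hi]
        have hmem := (e2 ⟨i, hi⟩).2
        have h3 := h𝒞sub hmem
        rw [Finset.mem_filter] at h3
        exact ⟨h3.1, h3.2⟩
    · exact ⟨fun _ => ∅, fun h => absurd h hcond⟩
  choose f hf using hch
  set g : Finset ℕ × ℕ → Finset ℕ := fun p => f p.1 p.2 with hg
  have hfp : ∀ p ∈ Rset t a, g p ∈ 𝒜 ∧ g p ∩ T = SY p.1 := by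
    intro p hp
    obtain ⟨h1, h2, h3, h4⟩ := mem_Rset.mp hp
    exact (hf p.1 ⟨h1, h2, h3⟩).2 p.2 h4
  have hginj : Set.InjOn g ↑(Rset t a) := by
    intro p hp p' hp' hgg
    rw [Finset.mem_coe] at hp hp'
    obtain ⟨h1, h2, h3, h4⟩ := mem_Rset.mp hp
    obtain ⟨h1', h2', h3', h4'⟩ := mem_Rset.mp hp'
    have hY : p.1 = p'.1 := by
      apply hSYinj _ h1 _ h1'
      rw [← (hfp p hp).2, ← (hfp p' hp').2, hgg]
    have hi : p.2 = p'.2 := by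
      apply (hf p.1 ⟨h1, h2, h3⟩).1 (Finset.mem_coe.mpr h4)
        (Finset.mem_coe.mpr (by rw [hY]; exact h4'))
      calc f p.1 p.2 = f p'.1 p'.2 := hgg
        _ = f p.1 p'.2 := by rw [hY]
    exact Prod.ext hY hi
  refine ⟨(Rset t a).image g, ?_, ?_, ?_⟩
  · intro A hA
    obtain ⟨p, hp, rfl⟩ := Finset.mem_image.mp hA
    exact (hfp p hp).1
  · rw [Finset.card_image_of_injOn hginj, card_Rset]
  · set ρ := Function.invFunOn g ↑(Rset t a) with hρdef
    have hbij : Set.BijOn g ↑(Rset t a) ↑((Rset t a).image g) := by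
      rw [Finset.coe_image]; exact hginj.bijOn_image
    have hinv := hbij.invOn_invFunOn
    refine ⟨ρ, σ, Set.BijOn.symm hinv.symm hbij, hσbij, ?_⟩
    intro A hA u hu
    have hAmem : A ∈ (↑((Rset t a).image g) : Set (Finset ℕ)) := Finset.mem_coe.mpr hA
    have hρA : ρ A ∈ Rset t a := Finset.mem_coe.mp ((Set.BijOn.symm hinv.symm hbij).1 hAmem)
    have hgρ : g (ρ A) = A := hinv.2 hAmem
    obtain ⟨hu1, hu2⟩ := hτ u hu
    rw [star_iff hu2]
    have hAT := (hfp (ρ A) hρA).2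
    rw [hgρ] at hAT
    have hu2T : u.2 ∈ T := Finset.mem_image_of_mem _ hu
    rw [← hSYmem (ρ A).1 u hu, ← hAT, Finset.mem_inter]
    tauto

/-- The pair `(Q, B)` built from a `t`-`(v,k,λ)` design on `[v]` is a
`(K₁,K₂,K';F,F';Z₁,Z₂,Z';𝒮,𝒮₁,…,𝒮_{K₁})` HHPDA with `K' = t`, `F = b`,
`F' = Σ a_s·C(t,s)`, `Z₁ = λ_{K₂}`, `Z₂ = λ₁ − λ_{K₂}`, `Z' = Σ a_s·C(t−1,s−1)`,
`|𝒮| = Σ a_s·C(t,s+1)` and `|𝒮_{k₁}| = λ_{K₂}·K₂`.  The conjuncts are: (A1)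
each column of `Q⁽⁰⁾` has `Z₁ = λ_{K₂}` stars; (A2) each column of each `Q^(k₁)`
has `Z₂ = λ₁ − λ_{K₂}` stars; (A3) the symbol sets `𝒮_{k₁}` are pairwise
disjoint (each symbol occurs only in its own subarray) and a star in `Q⁽⁰⁾`
forces every entry of that row of `Q^(k₁)` to be a star or a symbol of
`𝒮_{k₁}` (non-null); (A4) two distinct cells of `Q^(k₁)` with the same symbol
lie in distinct rows and columns with starred cross cells; `B` is a
`(t,F',Z',|𝒮|)` PDA; `|𝒮_{k₁}| = λ_{K₂}·K₂ `; and for every choice `τ` of `t`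
active users there is a row set `ζ` of size `F'` on which the star pattern of
`Q'` matches that of `B`. -/
theorem stmt12 (t v k lam b K₁ K₂ : ℕ)
    (𝒜 : Finset (Finset ℕ))
    (hdes : IsDesignF t v k lam (Finset.Icc 1 v) 𝒜)
    (hb : 𝒜.card = b) (ht : 2 ≤ t)
    (hK₂1 : 1 ≤ K₂) (hK₂t : K₂ ≤ t) (hdvd : K₂ ∣ v) (hK₁ : K₁ = v / K₂)
    (a : ℕ → ℕ)
    (ha : ∀ s ∈ Finset.Icc 1 (t - 1),
      a s ≤ lam * Nat.choose (v - t) (k - s) / Nat.choose (v - t) (k - t))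
    (hnz : ∃ s ∈ Finset.Icc 1 (t - 1), a s ≠ 0) :
    -- (A1) each column of Q⁽⁰⁾ has Z₁ = λ_{K₂} stars
    (∀ k₁ ∈ Finset.Icc 1 K₁,
      (𝒜.filter (fun A => Dblk K₂ k₁ ⊆ A)).card =
        lam * Nat.choose (v - K₂) (t - K₂) / Nat.choose (k - K₂) (t - K₂)) ∧
    -- (A2) each column of Q^(k₁) has Z₂ = λ₁ − λ_{K₂} stars
    (∀ k₁ ∈ Finset.Icc 1 K₁, ∀ i ∈ Dblk K₂ k₁,
      (𝒜.filter (fun A => Qmir K₂ k₁ A i = some none)).card =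
        lam * Nat.choose (v - 1) (t - 1) / Nat.choose (k - 1) (t - 1)
          - lam * Nat.choose (v - K₂) (t - K₂) / Nat.choose (k - K₂) (t - K₂)) ∧
    -- (A3) the symbol sets 𝒮_{k₁} are pairwise disjoint, and a star in Q⁽⁰⁾
    -- forces non-null entries in the corresponding row of Q^(k₁)
    (∀ k₁ ∈ Finset.Icc 1 K₁, ∀ k₁' ∈ Finset.Icc 1 K₁, k₁ ≠ k₁' →
      Disjoint (Ssym 𝒜 K₂ k₁) (Ssym 𝒜 K₂ k₁')) ∧
    (∀ k₁ ∈ Finset.Icc 1 K₁, ∀ A ∈ 𝒜, Dblk K₂ k₁ ⊆ A →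
      ∀ i ∈ Dblk K₂ k₁, Qmir K₂ k₁ A i ≠ none) ∧
    -- (A4) two distinct cells of Q^(k₁) with the same symbol lie in distinct
    -- rows and distinct columns and the cross cells are stars
    (∀ k₁ ∈ Finset.Icc 1 K₁, ∀ A ∈ 𝒜, ∀ A' ∈ 𝒜,
      ∀ i ∈ Dblk K₂ k₁, ∀ i' ∈ Dblk K₂ k₁,
      ((A, i) ≠ (A', i')) → ∀ l : ℕ × Finset ℕ,
        Qmir K₂ k₁ A i = some (some l) → Qmir K₂ k₁ A' i' = some (some l) →
          A ≠ A' ∧ i ≠ i' ∧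
            Qmir K₂ k₁ A i' = some none ∧ Qmir K₂ k₁ A' i = some none) ∧
    -- B is a (K', F', Z', |𝒮|) PDA
    ((Rset t a).card = ∑ s ∈ Finset.Icc 1 (t - 1), a s * Nat.choose t s ∧
      (∀ j ∈ Finset.Icc 1 t,
        ((Rset t a).filter (fun p => Bent p j = none)).card =
          ∑ s ∈ Finset.Icc 1 (t - 1), a s * Nat.choose (t - 1) (s - 1)) ∧
      (IntEntries t a).card =
        ∑ s ∈ Finset.Icc 1 (t - 1), a s * Nat.choose t (s + 1) ∧
      (∀ p ∈ Rset t a, ∀ p' ∈ Rset t a,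
        ∀ j ∈ Finset.Icc 1 t, ∀ j' ∈ Finset.Icc 1 t,
        (p, j) ≠ (p', j') → ∀ e : Finset ℕ × ℕ,
          Bent p j = some e → Bent p' j' = some e →
            p ≠ p' ∧ j ≠ j' ∧ Bent p j' = none ∧ Bent p' j = none)) ∧
    -- |𝒮_{k₁}| = λ_{K₂}·K₂ for every k₁ ∈ [K₁]
    (∀ k₁ ∈ Finset.Icc 1 K₁,
      (Ssym 𝒜 K₂ k₁).card =
        (lam * Nat.choose (v - K₂) (t - K₂) / Nat.choose (k - K₂) (t - K₂)) * K₂) ∧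
    -- hotplug condition: for every set τ of K' = t users (k₁, i) with
    -- k₁ ∈ [K₁] and i ∈ D_{k₁}, there is a row set ζ of size F' on which the
    -- star pattern of Q' matches that of B (under suitable bijections)
    (∀ τ : Finset (ℕ × ℕ),
      (∀ u ∈ τ, u.1 ∈ Finset.Icc 1 K₁ ∧ u.2 ∈ Dblk K₂ u.1) → τ.card = t →
      ∃ ζ : Finset (Finset ℕ), ζ ⊆ 𝒜 ∧
        ζ.card = ∑ s ∈ Finset.Icc 1 (t - 1), a s * Nat.choose t s ∧
        ∃ (ρ : Finset ℕ → Finset ℕ × ℕ) (σ : ℕ × ℕ → ℕ),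
          Set.BijOn ρ ↑ζ ↑(Rset t a) ∧
          Set.BijOn σ ↑τ ↑(Finset.Icc 1 t) ∧
          ∀ A ∈ ζ, ∀ u ∈ τ,
            ((Dblk K₂ u.1 ⊆ A ∨ Qmir K₂ u.1 A u.2 = some none) ↔
              σ u ∈ (ρ A).1)) := by
  
  obtain ⟨hXv, hkv, htk, ht1, hblk, hdesign⟩ := hdes
  have hA1 : ∀ k₁ ∈ Finset.Icc 1 K₁,
      (𝒜.filter (fun A => Dblk K₂ k₁ ⊆ A)).card =
        lam * Nat.choose (v - K₂) (t - K₂) / Nat.choose (k - K₂) (t - K₂) := by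
    intro k₁ hk₁
    rw [Finset.mem_Icc] at hk₁
    have h := aux_nS hXv htk hblk hdesign
      (Dblk_subset hk₁.2 hdvd hK₁) (by rw [card_Dblk hk₁.1]; exact hK₂t)
    rwa [card_Dblk hk₁.1] at h
  refine ⟨hA1, ?_, ?_, ?_, ?_, ?_, ?_, ?_⟩
  · -- A2
    intro k₁ hk₁ i hi
    have hk₁' := Finset.mem_Icc.mp hk₁
    have hfe : 𝒜.filter (fun A => Qmir K₂ k₁ A i = some none)
        = 𝒜.filter (fun A => i ∈ A ∧ ¬ Dblk K₂ k₁ ⊆ A) := by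
      apply Finset.filter_congr
      intro A _
      exact Qmir_star
    have hpart := Finset.card_filter_add_card_filter_not
      (s := 𝒜.filter (fun A => i ∈ A)) (p := fun A => Dblk K₂ k₁ ⊆ A)
    rw [Finset.filter_filter, Finset.filter_filter] at hpart
    have hD : 𝒜.filter (fun A => i ∈ A ∧ Dblk K₂ k₁ ⊆ A)
        = 𝒜.filter (fun A => Dblk K₂ k₁ ⊆ A) := by
      apply Finset.filter_congr
      intro A _
      constructor
      · exact fun h => h.2
      · exact fun h => ⟨h hi, h⟩
    have hi1 : 𝒜.filter (fun A => i ∈ A) = 𝒜.filter (fun A => {i} ⊆ A) := by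
      apply Finset.filter_congr
      intro A _
      rw [Finset.singleton_subset_iff]
    have hiv : i ∈ Finset.Icc 1 v := Dblk_subset hk₁'.2 hdvd hK₁ hi
    have hn1 : (𝒜.filter (fun A => {i} ⊆ A)).card =
        lam * Nat.choose (v - 1) (t - 1) / Nat.choose (k - 1) (t - 1) := by
      have h := aux_nS hXv htk hblk hdesign
        (Finset.singleton_subset_iff.mpr hiv) (by rw [Finset.card_singleton]; omega)
      rwa [Finset.card_singleton] at h
    have hnD := hA1 k₁ hk₁
    rw [hfe]
    rw [hD, hi1, hnD] at hpart
    rw [hn1] at hpart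
    omega
  · -- A3 disjointness
    intro k₁ _ k₁' _ hne
    rw [Finset.disjoint_left]
    intro l hl hl'
    rw [Ssym, Finset.mem_image] at hl hl'
    obtain ⟨p, _, rfl⟩ := hl
    obtain ⟨p', _, heq⟩ := hl'
    exact hne (congrArg Prod.fst heq).symm
  · -- A3 non-null
    intro k₁ _ A _ hDA i hi
    rw [Qmir, if_pos (hDA hi), if_pos hDA]
    simp
  · -- A4
    intro k₁ _ A _ A' _ i hi i' hi' hne l h1 h2
    rw [Qmir_symbol] at h1 h2
    obtain ⟨hiA, hDA, hl⟩ := h1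
    obtain ⟨hi'A', hDA', hl'⟩ := h2
    have herase : A.erase i = A'.erase i' := by
      have := hl.symm.trans hl'
      exact (Prod.mk.injEq _ _ _ _ ▸ this).2
    exact (symbol_clash hi hi' hiA hi'A' hDA hDA' herase hne).elim
  · -- PDA
    exact ⟨card_Rset t a, fun j hj => Rset_col_stars a hj,
      card_IntEntries t a ht, Bent_pda⟩
  · -- Ssym card
    intro k₁ hk₁
    rw [Ssym_card_eq (Finset.mem_Icc.mp hk₁).1, hA1 k₁ hk₁]
  · -- hotplug
    exact hotplug t v k lam K₁ K₂ 𝒜 hkv htk hblk hdesign hdvd hK₁ a ha
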